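/- Let M ∈ ℝ and assume that 2M·I − (γ/h) ∑_{j=1}^J [L_j, L_jᴴ] is positive semidefinite. Then for every λ > 0 the linear map A ↦ ℒA − (M+λ)A is a bijection of M_d(ℂ), and its inverse satisfies ‖(ℒ − (M+λ))^{-1} B‖ ≤ λ^{-1} ‖B‖ for all B ∈ M_d(ℂ). -/

import Mathlib

open Matrix
open scoped BigOperators ComplexOrder

/-- The Lindbladian `ℒA = (i/h)[P,A] + (γ/h) ∑ⱼ (LⱼALⱼᴴ − ½(LⱼᴴLⱼA + ALⱼᴴLⱼ))`. -/
noncomputable def Lindbladian {d J : ℕ} (h γ : ℝ) (P : Matrix (Fin d) (Fin d) ℂ)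
    (L : Fin J → Matrix (Fin d) (Fin d) ℂ) (A : Matrix (Fin d) (Fin d) ℂ) :
    Matrix (Fin d) (Fin d) ℂ :=
  (Complex.I / (h : ℂ)) • (P * A - A * P)
    + ((γ / h : ℝ) : ℂ) • ∑ j, (L j * A * (L j)ᴴ
        - (1 / 2 : ℂ) • ((L j)ᴴ * L j * A + A * ((L j)ᴴ * L j)))

/-- The adjoint Lindbladian
`ℒ*B = −(i/h)[P,B] + (γ/h) ∑ⱼ (LⱼᴴBLⱼ − ½(LⱼᴴLⱼB + BLⱼᴴLⱼ))`. -/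
noncomputable def LindbladianAdj {d J : ℕ} (h γ : ℝ) (P : Matrix (Fin d) (Fin d) ℂ)
    (L : Fin J → Matrix (Fin d) (Fin d) ℂ) (B : Matrix (Fin d) (Fin d) ℂ) :
    Matrix (Fin d) (Fin d) ℂ :=
  -(Complex.I / (h : ℂ)) • (P * B - B * P)
    + ((γ / h : ℝ) : ℂ) • ∑ j, ((L j)ᴴ * B * L j
        - (1 / 2 : ℂ) • ((L j)ᴴ * L j * B + B * ((L j)ᴴ * L j)))


/-- The Hilbert–Schmidt norm `‖A‖ = (tr(AAᴴ))^{1/2}`. -/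
noncomputable def hsNorm {d : ℕ} (A : Matrix (Fin d) (Fin d) ℂ) : ℝ :=
  Real.sqrt (((A * Aᴴ).trace).re)

section Aux
open scoped InnerProductSpace
namespace LindAux

variable {d : ℕ}

noncomputable def e (A : Matrix (Fin d) (Fin d) ℂ) : EuclideanSpace ℂ (Fin d × Fin d) :=
  WithLp.toLp 2 fun p : Fin d × Fin d => A p.1 p.2

lemma e_inj : Function.Injective (e (d := d)) := by
  intro A B hAB
  ext i j
  exact congrArg (fun x => x (i, j)) hAB

lemma inner_e (A B : Matrix (Fin d) (Fin d) ℂ) :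
    ⟪e B, e A⟫_ℂ = (A * Bᴴ).trace := by
  simp only [e, PiLp.toLp_apply, PiLp.inner_apply, RCLike.inner_apply, Matrix.trace, Matrix.diag,
    Matrix.mul_apply, Matrix.conjTranspose_apply, Fintype.sum_prod_type]
  congr 1

lemma norm_e_sq (A : Matrix (Fin d) (Fin d) ℂ) :
    ‖e A‖ ^ 2 = ((A * Aᴴ).trace).re := by
  have h := inner_self_eq_norm_sq (𝕜 := ℂ) (e A)
  rw [inner_e] at h
  simpa using h.symm

lemma hsNorm_eq (A : Matrix (Fin d) (Fin d) ℂ) : hsNorm A = ‖e A‖ := by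
  rw [hsNorm, ← norm_e_sq, Real.sqrt_sq (norm_nonneg _)]

lemma trace_re_nonneg {C : Matrix (Fin d) (Fin d) ℂ} (hC : C.PosSemidef) :
    0 ≤ C.trace.re := by
  rw [Matrix.trace, Complex.re_sum]
  refine Finset.sum_nonneg fun i _ => ?_
  have h := hC.re_dotProduct_nonneg (Pi.single i 1)
  simpa [dotProduct, Matrix.mulVec, Pi.single_apply, Finset.mul_sum, mul_comm] using h

lemma re_trace_mul_le (X Y : Matrix (Fin d) (Fin d) ℂ) :
    ((X * Yᴴ).trace).re ≤ (1 / 2) * (((X * Xᴴ).trace).re + ((Y * Yᴴ).trace).re) := by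
  rw [← inner_e, ← norm_e_sq, ← norm_e_sq]
  have h1 : (⟪e Y, e X⟫_ℂ).re ≤ ‖⟪e Y, e X⟫_ℂ‖ := Complex.re_le_norm _
  have h2 := norm_inner_le_norm (𝕜 := ℂ) (e Y) (e X)
  nlinarith [norm_nonneg (e X), norm_nonneg (e Y), sq_nonneg (‖e X‖ - ‖e Y‖)]

lemma re_half_mul (z : ℂ) : ((1 / 2 : ℂ) * z).re = (1 / 2) * z.re := by
  have h : (1 / 2 : ℂ) = ((1 / 2 : ℝ) : ℂ) := by norm_num
  rw [h, Complex.re_ofReal_mul]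

/-- The dissipative term bound for each `j`. -/
lemma diss_bound (Lj A : Matrix (Fin d) (Fin d) ℂ) :
    (((Lj * A * Ljᴴ - (1 / 2 : ℂ) • (Ljᴴ * Lj * A + A * (Ljᴴ * Lj))) * Aᴴ).trace).re
      ≤ (1 / 2) * ((A * (Lj * Ljᴴ - Ljᴴ * Lj) * Aᴴ).trace).re := by
  have hsplit : (Lj * A * Ljᴴ - (1 / 2 : ℂ) • (Ljᴴ * Lj * A + A * (Ljᴴ * Lj))) * Aᴴ
      = (Lj * A) * (A * Lj)ᴴ
        - (1 / 2 : ℂ) • (Ljᴴ * Lj * A * Aᴴ + A * (Ljᴴ * Lj) * Aᴴ) := by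
    simp only [Matrix.sub_mul, Matrix.add_mul, smul_mul_assoc, Matrix.conjTranspose_mul,
      Matrix.mul_assoc]
  rw [hsplit, Matrix.trace_sub, Matrix.trace_smul, Matrix.trace_add, smul_eq_mul]
  have hcs := re_trace_mul_le (Lj * A) (A * Lj)
  have h1 : ((Lj * A) * (Lj * A)ᴴ).trace = (Ljᴴ * Lj * A * Aᴴ).trace := by
    rw [Matrix.conjTranspose_mul]
    have : Lj * A * (Aᴴ * Ljᴴ) = Lj * (A * Aᴴ) * Ljᴴ := by
      simp only [Matrix.mul_assoc]
    rw [this, Matrix.trace_mul_cycle]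
    simp only [Matrix.mul_assoc]
  have h2 : ((A * Lj) * (A * Lj)ᴴ).trace = (A * (Lj * Ljᴴ) * Aᴴ).trace := by
    rw [Matrix.conjTranspose_mul]
    simp only [Matrix.mul_assoc]
  have h3 : (A * (Lj * Ljᴴ - Ljᴴ * Lj) * Aᴴ).trace
      = (A * (Lj * Ljᴴ) * Aᴴ).trace - (A * (Ljᴴ * Lj) * Aᴴ).trace := by
    rw [Matrix.mul_sub, Matrix.sub_mul, Matrix.trace_sub]
  rw [h1, h2] at hcs
  rw [h3]
  simp only [Complex.sub_re, Complex.add_re, re_half_mul, Complex.ofReal_re] at *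
  linarith

/-- The key estimate: `Re tr(ℒA · Aᴴ) ≤ M‖A‖²`. -/
lemma est {J : ℕ} (h γ : ℝ) (hh : 0 < h) (hγ : 0 ≤ γ)
    (P : Matrix (Fin d) (Fin d) ℂ) (hP : P.IsHermitian)
    (L : Fin J → Matrix (Fin d) (Fin d) ℂ) (M : ℝ)
    (hM : (((2 * M : ℝ) : ℂ) • (1 : Matrix (Fin d) (Fin d) ℂ)
        - ((γ / h : ℝ) : ℂ) • ∑ j, (L j * (L j)ᴴ - (L j)ᴴ * L j)).PosSemidef)
    (A : Matrix (Fin d) (Fin d) ℂ) :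
    ((Lindbladian h γ P L A * Aᴴ).trace).re ≤ M * ((A * Aᴴ).trace).re := by
  have hr : (0 : ℝ) ≤ γ / h := div_nonneg hγ hh.le
  -- decompose the trace
  have hdec : (Lindbladian h γ P L A * Aᴴ).trace
      = (Complex.I / (h : ℂ)) * ((P * A - A * P) * Aᴴ).trace
        + ((γ / h : ℝ) : ℂ) * ∑ j, ((L j * A * (L j)ᴴ
            - (1 / 2 : ℂ) • ((L j)ᴴ * L j * A + A * ((L j)ᴴ * L j))) * Aᴴ).trace := by
    rw [Lindbladian, Matrix.add_mul, Matrix.trace_add, smul_mul_assoc, Matrix.trace_smul,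
      smul_mul_assoc, Matrix.trace_smul, Finset.sum_mul, Matrix.trace_sum, smul_eq_mul,
      smul_eq_mul]
  -- the Hamiltonian part has zero real part
  have hconj : (starRingEnd ℂ) (((P * A - A * P) * Aᴴ).trace) = ((P * A - A * P) * Aᴴ).trace := by
    calc (starRingEnd ℂ) (((P * A - A * P) * Aᴴ).trace)
        = (((P * A - A * P) * Aᴴ)ᴴ).trace := (Matrix.trace_conjTranspose _).symm
      _ = ((P * A - A * P) * Aᴴ).trace := by
          simp only [Matrix.conjTranspose_mul, Matrix.conjTranspose_sub,
            Matrix.conjTranspose_conjTranspose, hP.eq]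
          rw [Matrix.mul_sub, Matrix.sub_mul, Matrix.trace_sub, Matrix.trace_sub,
            ← Matrix.mul_assoc, ← Matrix.mul_assoc, Matrix.trace_mul_cycle A Aᴴ P]
  have him : (((P * A - A * P) * Aᴴ).trace).im = 0 := Complex.conj_eq_iff_im.mp hconj
  have hH : ((Complex.I / (h : ℂ)) * ((P * A - A * P) * Aᴴ).trace).re = 0 := by
    rw [Complex.mul_re, him]
    have hre : (Complex.I / (h : ℂ)).re = 0 := by
      simp [Complex.div_re]
    rw [hre]
    ring
  -- dissipative part
  have hsum : (∑ j, ((L j * A * (L j)ᴴ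
        - (1 / 2 : ℂ) • ((L j)ᴴ * L j * A + A * ((L j)ᴴ * L j))) * Aᴴ).trace).re
      ≤ ∑ j, (1 / 2) * ((A * (L j * (L j)ᴴ - (L j)ᴴ * L j) * Aᴴ).trace).re := by
    rw [Complex.re_sum]
    exact Finset.sum_le_sum fun j _ => diss_bound (L j) A
  -- consequence of the PSD hypothesis
  have hpsd := trace_re_nonneg (hM.mul_mul_conjTranspose_same A)
  have hexp : A * ((((2 * M : ℝ) : ℂ)) • (1 : Matrix (Fin d) (Fin d) ℂ)
        - ((γ / h : ℝ) : ℂ) • ∑ j, (L j * (L j)ᴴ - (L j)ᴴ * L j)) * Aᴴ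
      = (((2 * M : ℝ) : ℂ)) • (A * Aᴴ)
        - ((γ / h : ℝ) : ℂ) • (A * (∑ j, (L j * (L j)ᴴ - (L j)ᴴ * L j)) * Aᴴ) := by
    simp only [Matrix.mul_sub, Matrix.sub_mul, mul_smul_comm, smul_mul_assoc, Matrix.mul_one]
  rw [hexp, Matrix.trace_sub, Matrix.trace_smul, Matrix.trace_smul] at hpsd
  have hSsum : (A * (∑ j, (L j * (L j)ᴴ - (L j)ᴴ * L j)) * Aᴴ).trace
      = ∑ j, (A * (L j * (L j)ᴴ - (L j)ᴴ * L j) * Aᴴ).trace := by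
    rw [Finset.mul_sum, Finset.sum_mul, Matrix.trace_sum]
  rw [hSsum] at hpsd
  simp only [smul_eq_mul, Complex.sub_re, Complex.re_ofReal_mul, Complex.re_sum] at hpsd
  -- combine
  rw [hdec, Complex.add_re, hH, Complex.re_ofReal_mul, zero_add]
  have hstep : (γ / h) * (∑ j, ((L j * A * (L j)ᴴ
        - (1 / 2 : ℂ) • ((L j)ᴴ * L j * A + A * ((L j)ᴴ * L j))) * Aᴴ).trace).re
      ≤ (γ / h) * ∑ j, (1 / 2) * ((A * (L j * (L j)ᴴ - (L j)ᴴ * L j) * Aᴴ).trace).re :=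
    mul_le_mul_of_nonneg_left hsum hr
  have hfin : (γ / h) * ∑ j, (1 / 2) * ((A * (L j * (L j)ᴴ - (L j)ᴴ * L j) * Aᴴ).trace).re
      = (1 / 2) * ((γ / h) * ∑ j, ((A * (L j * (L j)ᴴ - (L j)ᴴ * L j) * Aᴴ).trace).re) := by
    rw [← Finset.mul_sum]
    ring
  rw [hfin] at hstep
  refine hstep.trans ?_
  linarith

lemma lind_add {J : ℕ} (h γ : ℝ) (P : Matrix (Fin d) (Fin d) ℂ)
    (L : Fin J → Matrix (Fin d) (Fin d) ℂ) (A B : Matrix (Fin d) (Fin d) ℂ) :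
    Lindbladian h γ P L (A + B) = Lindbladian h γ P L A + Lindbladian h γ P L B := by
  unfold Lindbladian
  have hterm : ∀ j : Fin J, L j * (A + B) * (L j)ᴴ
        - (1 / 2 : ℂ) • ((L j)ᴴ * L j * (A + B) + (A + B) * ((L j)ᴴ * L j))
      = (L j * A * (L j)ᴴ - (1 / 2 : ℂ) • ((L j)ᴴ * L j * A + A * ((L j)ᴴ * L j)))
        + (L j * B * (L j)ᴴ - (1 / 2 : ℂ) • ((L j)ᴴ * L j * B + B * ((L j)ᴴ * L j))) := by
    intro j
    simp only [Matrix.mul_add, Matrix.add_mul, smul_add]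
    module
  rw [Finset.sum_congr rfl fun j _ => hterm j, Finset.sum_add_distrib]
  have h0 : P * (A + B) - (A + B) * P = (P * A - A * P) + (P * B - B * P) := by
    simp only [Matrix.mul_add, Matrix.add_mul]
    module
  rw [h0]
  module

lemma lind_smul {J : ℕ} (h γ : ℝ) (P : Matrix (Fin d) (Fin d) ℂ)
    (L : Fin J → Matrix (Fin d) (Fin d) ℂ) (c : ℂ) (A : Matrix (Fin d) (Fin d) ℂ) :
    Lindbladian h γ P L (c • A) = c • Lindbladian h γ P L A := by
  unfold Lindbladian
  have hterm : ∀ j : Fin J, L j * (c • A) * (L j)ᴴ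
        - (1 / 2 : ℂ) • ((L j)ᴴ * L j * (c • A) + (c • A) * ((L j)ᴴ * L j))
      = c • (L j * A * (L j)ᴴ - (1 / 2 : ℂ) • ((L j)ᴴ * L j * A + A * ((L j)ᴴ * L j))) := by
    intro j
    simp only [mul_smul_comm, smul_mul_assoc]
    module
  rw [Finset.sum_congr rfl fun j _ => hterm j, ← Finset.smul_sum]
  have h0 : P * (c • A) - (c • A) * P = c • (P * A - A * P) := by
    simp only [mul_smul_comm, smul_mul_assoc]
    module
  rw [h0]
  module

end LindAux
end Aux

open LindAux
open scoped InnerProductSpace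

/-- The resolvent bound in the proof of Proposition 4.6 (finite-dimensional instance):
if `(γ/h) ∑ⱼ [Lⱼ,Lⱼᴴ] ≤ 2M`, then for every `λ > 0` the map `A ↦ ℒA − (M+λ)A` is a
bijection of `M_d(ℂ)` whose inverse satisfies `‖(ℒ − (M+λ))⁻¹B‖ ≤ λ⁻¹‖B‖`. -/
theorem lindbladian_resolvent_bijective (d J : ℕ) (hd : 1 ≤ d) (hJ : 1 ≤ J) (h γ : ℝ)
    (hh : 0 < h) (hγ : 0 ≤ γ) (P : Matrix (Fin d) (Fin d) ℂ) (hP : P.IsHermitian)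
    (L : Fin J → Matrix (Fin d) (Fin d) ℂ) (M : ℝ)
    (hM : (((2 * M : ℝ) : ℂ) • (1 : Matrix (Fin d) (Fin d) ℂ)
        - ((γ / h : ℝ) : ℂ) • ∑ j, (L j * (L j)ᴴ - (L j)ᴴ * L j)).PosSemidef)
    (lam : ℝ) (hlam : 0 < lam) :
    Function.Bijective
        (fun A : Matrix (Fin d) (Fin d) ℂ =>
          Lindbladian h γ P L A - (((M + lam : ℝ) : ℂ)) • A)
      ∧ ∀ A B : Matrix (Fin d) (Fin d) ℂ,
          Lindbladian h γ P L A - (((M + lam : ℝ) : ℂ)) • A = B →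
          hsNorm A ≤ lam⁻¹ * hsNorm B := by
  classical
  -- the key norm bound
  have key : ∀ A B : Matrix (Fin d) (Fin d) ℂ,
      Lindbladian h γ P L A - (((M + lam : ℝ) : ℂ)) • A = B →
      lam * ‖e A‖ ^ 2 ≤ ‖e B‖ * ‖e A‖ := by
    intro A B hAB
    have hest := est h γ hh hγ P hP L M hM A
    have hBtr : ((B * Aᴴ).trace).re
        = ((Lindbladian h γ P L A * Aᴴ).trace).re - (M + lam) * ((A * Aᴴ).trace).re := by
      rw [← hAB, Matrix.sub_mul, Matrix.trace_sub, smul_mul_assoc, Matrix.trace_smul,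
        smul_eq_mul, Complex.sub_re, Complex.re_ofReal_mul]
    have hneg : -((B * Aᴴ).trace).re ≤ ‖e B‖ * ‖e A‖ := by
      rw [← inner_e B A]
      have h1 : -(⟪e A, e B⟫_ℂ).re ≤ ‖⟪e A, e B⟫_ℂ‖ := by
        have h0 := Complex.abs_re_le_norm ⟪e A, e B⟫_ℂ
        linarith [abs_le.mp h0]
      have h2 := norm_inner_le_norm (𝕜 := ℂ) (e A) (e B)
      nlinarith
    rw [norm_e_sq]
    linarith [norm_e_sq A]
  have keyNorm : ∀ A B : Matrix (Fin d) (Fin d) ℂ,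
      Lindbladian h γ P L A - (((M + lam : ℝ) : ℂ)) • A = B →
      hsNorm A ≤ lam⁻¹ * hsNorm B := by
    intro A B hAB
    have hk := key A B hAB
    by_cases hA0 : ‖e A‖ = 0
    · rw [hsNorm_eq, hA0]
      have : 0 ≤ hsNorm B := Real.sqrt_nonneg _
      positivity
    · have hpos : 0 < ‖e A‖ := lt_of_le_of_ne (norm_nonneg _) (Ne.symm hA0)
      have hle : lam * ‖e A‖ ≤ ‖e B‖ := by
        have := mul_le_mul_of_nonneg_right hk (le_of_lt (inv_pos.mpr hpos))
        calc lam * ‖e A‖ = lam * ‖e A‖ ^ 2 * ‖e A‖⁻¹ := by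
              field_simp
          _ ≤ ‖e B‖ * ‖e A‖ * ‖e A‖⁻¹ := this
          _ = ‖e B‖ := by field_simp
      rw [hsNorm_eq, hsNorm_eq]
      calc ‖e A‖ = lam⁻¹ * (lam * ‖e A‖) := by field_simp
        _ ≤ lam⁻¹ * ‖e B‖ := mul_le_mul_of_nonneg_left hle (inv_nonneg.mpr hlam.le)
  refine ⟨?_, keyNorm⟩
  -- package the map as a linear map
  set T : Matrix (Fin d) (Fin d) ℂ →ₗ[ℂ] Matrix (Fin d) (Fin d) ℂ :=
    { toFun := fun A => Lindbladian h γ P L A - (((M + lam : ℝ) : ℂ)) • A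
      map_add' := by
        intro A B
        rw [lind_add]
        module
      map_smul' := by
        intro c A
        rw [lind_smul]
        simp only [RingHom.id_apply]
        module } with hT
  have hinj : Function.Injective T := by
    rw [injective_iff_map_eq_zero]
    intro A hA
    have hk := key A 0 hA
    have hB0 : e (0 : Matrix (Fin d) (Fin d) ℂ) = 0 := by ext; simp [e]
    rw [hB0, norm_zero, zero_mul] at hk
    have hA0 : ‖e A‖ = 0 := by
      by_contra hne
      have hpos : 0 < ‖e A‖ := lt_of_le_of_ne (norm_nonneg _) (Ne.symm hne)
      nlinarith [mul_pos hlam (pow_pos hpos 2)]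
    have : e A = e 0 := by
      rw [hB0]
      exact norm_eq_zero.mp hA0
    exact e_inj this
  have hsurj : Function.Surjective T := LinearMap.injective_iff_surjective.mp hinj
  exact ⟨hinj, hsurj⟩
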